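/- Let h_x = −(1/2^d)(∏_{i=0}^{d−1}(π−θ̄_i)/π) x* + (1/2^d)[x − Σ_{i=0}^{d−1}(sin θ̄_i/π)(∏_{j=i+1}^{d−1}(π−θ̄_j)/π)(‖x*‖/‖x‖)x], where θ̄_0 = ∠(x,x*) and θ̄_i = g(θ̄_{i−1}). Then for all nonzero x, y: ‖h_x − h_y‖ ≤ (1/2^d + (6d + 4d²)/(π 2^d) · max(1/‖x‖, 1/‖y‖) · ‖x*‖) ‖x − y‖. -/

import Mathlib

noncomputable def g (θ : ℝ) : ℝ :=
  Real.arccos (((Real.pi - θ) * Real.cos θ + Real.sin θ) / Real.pi)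

noncomputable def thetaSeq (θ0 : ℝ) : ℕ → ℝ
  | 0 => θ0
  | (i + 1) => g (thetaSeq θ0 i)

/-- The expected gradient-like field `h_x` of the `d`-layer random ReLU network objective. -/
noncomputable def hfield (k d : ℕ) (xs x : EuclideanSpace ℝ (Fin k)) : EuclideanSpace ℝ (Fin k) :=
  (-(((2 : ℝ) ^ d)⁻¹ *
      ∏ i ∈ Finset.range d,
        (Real.pi - thetaSeq (InnerProductGeometry.angle x xs) i) / Real.pi)) • xs +
  ((2 : ℝ) ^ d)⁻¹ •
    (x - ((∑ i ∈ Finset.range d,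
        (Real.sin (thetaSeq (InnerProductGeometry.angle x xs) i) / Real.pi) *
          ∏ j ∈ Finset.Ico (i + 1) d,
            (Real.pi - thetaSeq (InnerProductGeometry.angle x xs) j) / Real.pi) *
      (‖xs‖ / ‖x‖)) • x)
section Aux
open Real Set InnerProductGeometry
local notation "⟪" x ", " y "⟫R" => @inner ℝ _ _ x y

noncomputable def auxF (θ : ℝ) : ℝ := ((π - θ) * Real.cos θ + Real.sin θ) / π

lemma aux_sin_ge : ∀ θ ∈ Set.Icc 0 π, θ * Real.cos θ ≤ Real.sin θ := by
  have hmono : MonotoneOn (fun θ => Real.sin θ - θ * Real.cos θ) (Set.Icc 0 π) := by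
    apply monotoneOn_of_deriv_nonneg (convex_Icc 0 π)
    · fun_prop
    · intro θ hθ
      exact (((Real.hasDerivAt_sin θ).sub
        (((hasDerivAt_id θ).mul (Real.hasDerivAt_cos θ)))).differentiableAt).differentiableWithinAt
    · intro θ hθ
      rw [interior_Icc] at hθ
      have h : HasDerivAt (fun θ => Real.sin θ - θ * Real.cos θ)
          (Real.cos θ - (1 * Real.cos θ + θ * (-Real.sin θ))) θ :=
        (Real.hasDerivAt_sin θ).sub ((hasDerivAt_id θ).mul (Real.hasDerivAt_cos θ))
      rw [h.deriv]
      have : 0 ≤ Real.sin θ := Real.sin_nonneg_of_nonneg_of_le_pi hθ.1.le hθ.2.le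
      nlinarith [hθ.1]
  intro θ hθ
  have := hmono (left_mem_Icc.2 Real.pi_pos.le) hθ hθ.1
  simpa using this

lemma auxF_nonneg {θ : ℝ} (hθ : θ ∈ Set.Icc 0 π) : 0 ≤ auxF θ := by
  have h := aux_sin_ge (π - θ) ⟨by linarith [hθ.2], by linarith [hθ.1]⟩
  rw [Real.sin_pi_sub, Real.cos_pi_sub] at h
  have : 0 ≤ (π - θ) * Real.cos θ + Real.sin θ := by nlinarith
  exact div_nonneg this Real.pi_pos.le

lemma auxF_lt_one {θ : ℝ} (h0 : 0 < θ) (hθ : θ ≤ π) : auxF θ < 1 := by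
  have h1 : Real.sin θ < θ := Real.sin_lt h0
  have h3 : (π - θ) * Real.cos θ ≤ π - θ := by nlinarith [Real.cos_le_one θ]
  rw [auxF, div_lt_one Real.pi_pos]; linarith

lemma aux_key {θ : ℝ} (hθ : θ ∈ Set.Icc 0 π) :
    ((π - θ) * Real.sin θ / π) ^ 2 ≤ 1 - auxF θ ^ 2 := by
  have hs : 0 ≤ Real.sin θ := Real.sin_nonneg_of_nonneg_of_le_pi hθ.1 hθ.2
  have hsθ : Real.sin θ ≤ θ := by
    have := Real.abs_sin_le_abs (x := θ); rw [abs_of_nonneg hθ.1] at this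
    exact (le_abs_self _).trans this
  have h2 : 2 * Real.sin θ * Real.cos θ ≤ 2 * θ := by
    have h := Real.abs_sin_le_abs (x := 2*θ)
    rw [abs_of_nonneg (by linarith [hθ.1] : (0:ℝ) ≤ 2*θ)] at h
    have := (le_abs_self (Real.sin (2*θ))).trans h
    rwa [Real.sin_two_mul] at this
  have hpyth := Real.sin_sq_add_cos_sq θ
  have hπ := Real.pi_pos
  have hmain : ((π - θ) * Real.sin θ) ^ 2 + ((π - θ) * Real.cos θ + Real.sin θ) ^ 2 ≤ π ^ 2 := by
    have hp2 : (π - θ) ^ 2 * (Real.sin θ ^ 2 + Real.cos θ ^ 2) = (π - θ) ^ 2 := by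
      rw [hpyth]; ring
    have hsq : Real.sin θ ^ 2 ≤ θ ^ 2 := by nlinarith
    have h2m := mul_le_mul_of_nonneg_left h2 (by linarith [hθ.2] : (0:ℝ) ≤ π - θ)
    nlinarith [hp2, hsq, h2m]
  have hd : (((π - θ) * Real.sin θ) ^ 2 + ((π - θ) * Real.cos θ + Real.sin θ) ^ 2) / π ^ 2 ≤ 1 :=
    div_le_one_of_le₀ hmain (by positivity)
  rw [add_div] at hd
  rw [auxF, div_pow, div_pow]
  linarith

lemma g_eq_arccos_auxF (θ : ℝ) : g θ = Real.arccos (auxF θ) := rfl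

lemma auxF_hasDerivAt (θ : ℝ) : HasDerivAt auxF (-((π - θ) * Real.sin θ / π)) θ := by
  have h : HasDerivAt (fun θ => ((π - θ) * Real.cos θ + Real.sin θ))
      ((0 - 1) * Real.cos θ + (π - θ) * (-Real.sin θ) + Real.cos θ) θ :=
    (((hasDerivAt_const θ π).sub (hasDerivAt_id θ)).mul (Real.hasDerivAt_cos θ)).add
      (Real.hasDerivAt_sin θ)
  have := h.div_const π
  refine this.congr_deriv ?_
  ring

lemma g_lip_Ioc : LipschitzOnWith 1 g (Set.Ioc 0 π) := by
  have hgeq : g = fun θ => Real.arccos (auxF θ) := rfl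
  rw [hgeq]
  apply (convex_Ioc 0 π).lipschitzOnWith_of_nnnorm_hasDerivWithin_le
    (f' := fun θ => ((π - θ) * Real.sin θ / π) / Real.sqrt (1 - auxF θ ^ 2))
  · intro θ hθ
    have hF0 : 0 ≤ auxF θ := auxF_nonneg ⟨hθ.1.le, hθ.2⟩
    have hF1 : auxF θ < 1 := auxF_lt_one hθ.1 hθ.2
    have h1 : auxF θ ≠ -1 := by linarith
    have h2 : auxF θ ≠ 1 := by linarith
    have := (Real.hasDerivAt_arccos h1 h2).comp θ (auxF_hasDerivAt θ)
    refine this.hasDerivWithinAt.congr_deriv ?_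
    field_simp
  · intro θ hθ
    have hF0 : 0 ≤ auxF θ := auxF_nonneg ⟨hθ.1.le, hθ.2⟩
    have hF1 : auxF θ < 1 := auxF_lt_one hθ.1 hθ.2
    have hq : 0 ≤ (π - θ) * Real.sin θ / π := by
      have h1 := Real.sin_nonneg_of_nonneg_of_le_pi hθ.1.le hθ.2
      exact div_nonneg (mul_nonneg (by linarith [hθ.2]) h1) Real.pi_pos.le
    have hpos : 0 < 1 - auxF θ ^ 2 := by nlinarith
    have hle : (π - θ) * Real.sin θ / π ≤ Real.sqrt (1 - auxF θ ^ 2) := by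
      rw [show (π - θ) * Real.sin θ / π = Real.sqrt (((π - θ) * Real.sin θ / π) ^ 2) by
        rw [Real.sqrt_sq hq]]
      exact Real.sqrt_le_sqrt (aux_key ⟨hθ.1.le, hθ.2⟩)
    have hs : 0 < Real.sqrt (1 - auxF θ ^ 2) := Real.sqrt_pos.2 hpos
    rw [← NNReal.coe_le_coe]
    simp only [coe_nnnorm, Real.norm_eq_abs, NNReal.coe_one]
    rw [abs_of_nonneg (by positivity)]
    rw [div_le_one hs]
    exact hle

lemma g_cont : Continuous g := by
  have hgeq : g = fun θ => Real.arccos (auxF θ) := rfl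
  rw [hgeq]
  apply Real.continuous_arccos.comp
  unfold auxF
  fun_prop

lemma g_zero : g 0 = 0 := by
  rw [g_eq_arccos_auxF]
  simp [auxF, div_self Real.pi_ne_zero, Real.arccos_one]

lemma g_mem (θ : ℝ) : g θ ∈ Set.Icc 0 π := ⟨Real.arccos_nonneg _, Real.arccos_le_pi _⟩

lemma g_lip {a b : ℝ} (ha : a ∈ Set.Icc 0 π) (hb : b ∈ Set.Icc 0 π) :
    |g a - g b| ≤ |a - b| := by
  wlog hab : a ≤ b generalizing a b
  · rw [abs_sub_comm, abs_sub_comm a b]; exact this hb ha (by linarith)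
  rcases eq_or_lt_of_le ha.1 with h0 | h0
  · rcases eq_or_lt_of_le hab with rfl | hblt
    · simp
    rw [← h0, g_zero, zero_sub, abs_neg, zero_sub, abs_neg]
    rw [← h0] at hblt
    rw [abs_of_nonneg (g_mem b).1, abs_of_nonneg (by linarith)]
    have hev : ∀ ε ∈ Set.Ioc 0 b, g b - b ≤ g ε := by
      intro ε hε
      have hlip := g_lip_Ioc.dist_le_mul b ⟨hblt, hb.2⟩ ε ⟨hε.1, hε.2.trans hb.2⟩
      rw [Real.dist_eq, Real.dist_eq] at hlip
      have h1 : g b - g ε ≤ |b - ε| := (le_abs_self _).trans (by simpa using hlip)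
      rw [abs_of_nonneg (by linarith [hε.2])] at h1
      linarith [hε.1]
    have hne : (nhdsWithin 0 (Set.Ioc 0 b)).NeBot := by
      apply mem_closure_iff_nhdsWithin_neBot.1
      rw [closure_Ioc (by linarith : (0:ℝ) ≠ b)]
      exact ⟨le_refl 0, by linarith⟩
    have htend : Filter.Tendsto g (nhdsWithin 0 (Set.Ioc 0 b)) (nhds (g 0)) :=
      (g_cont.tendsto 0).mono_left nhdsWithin_le_nhds
    rw [g_zero] at htend
    have : g b - b ≤ 0 :=
      ge_of_tendsto htend (Filter.eventually_of_mem self_mem_nhdsWithin hev)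
    linarith
  · have hlip := g_lip_Ioc.dist_le_mul a ⟨h0, ha.2⟩ b ⟨lt_of_lt_of_le h0 hab, hb.2⟩
    rw [Real.dist_eq, Real.dist_eq] at hlip
    simpa using hlip

lemma theta_mem {a : ℝ} (ha : a ∈ Set.Icc 0 π) (i : ℕ) : thetaSeq a i ∈ Set.Icc 0 π := by
  induction i with
  | zero => exact ha
  | succ n ih => exact g_mem _

lemma theta_lip {a b : ℝ} (ha : a ∈ Set.Icc 0 π) (hb : b ∈ Set.Icc 0 π) (i : ℕ) :
    |thetaSeq a i - thetaSeq b i| ≤ |a - b| := by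
  induction i with
  | zero => exact le_refl _
  | succ n ih => exact (g_lip (theta_mem ha n) (theta_mem hb n)).trans ih

lemma prod_diff_le {s : Finset ℕ} {f h : ℕ → ℝ} {ε : ℝ} (hε : 0 ≤ ε)
    (hf : ∀ i ∈ s, f i ∈ Set.Icc (0:ℝ) 1) (hh : ∀ i ∈ s, h i ∈ Set.Icc (0:ℝ) 1)
    (hd : ∀ i ∈ s, |f i - h i| ≤ ε) :
    |∏ i ∈ s, f i - ∏ i ∈ s, h i| ≤ s.card * ε := by
  classical
  induction s using Finset.induction_on with
  | empty => simp
  | insert a t hx ih =>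
    have hf' := fun i hi => hf i (Finset.mem_insert_of_mem hi)
    have hh' := fun i hi => hh i (Finset.mem_insert_of_mem hi)
    have hd' := fun i hi => hd i (Finset.mem_insert_of_mem hi)
    have iht := ih hf' hh' hd'
    have hfa := hf a (Finset.mem_insert_self a t)
    have hha := hh a (Finset.mem_insert_self a t)
    have hda := hd a (Finset.mem_insert_self a t)
    rw [Finset.prod_insert hx, Finset.prod_insert hx, Finset.card_insert_of_notMem hx]
    have hpf : ∏ i ∈ t, f i ∈ Set.Icc (0:ℝ) 1 :=
      ⟨Finset.prod_nonneg (fun i hi => (hf' i hi).1),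
       Finset.prod_le_one (fun i hi => (hf' i hi).1) (fun i hi => (hf' i hi).2)⟩
    have hph : ∏ i ∈ t, h i ∈ Set.Icc (0:ℝ) 1 :=
      ⟨Finset.prod_nonneg (fun i hi => (hh' i hi).1),
       Finset.prod_le_one (fun i hi => (hh' i hi).1) (fun i hi => (hh' i hi).2)⟩
    have hkey : f a * ∏ i ∈ t, f i - h a * ∏ i ∈ t, h i
        = f a * (∏ i ∈ t, f i - ∏ i ∈ t, h i) + (f a - h a) * ∏ i ∈ t, h i := by ring
    rw [hkey]
    calc |f a * (∏ i ∈ t, f i - ∏ i ∈ t, h i) + (f a - h a) * ∏ i ∈ t, h i|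
        ≤ |f a * (∏ i ∈ t, f i - ∏ i ∈ t, h i)| + |(f a - h a) * ∏ i ∈ t, h i| := abs_add_le _ _
      _ ≤ 1 * (t.card * ε) + ε * 1 := by
          rw [abs_mul, abs_mul]
          apply add_le_add
          · exact mul_le_mul (by rw [abs_of_nonneg hfa.1]; exact hfa.2) iht (abs_nonneg _)
              zero_le_one
          · exact mul_le_mul hda (by rw [abs_of_nonneg hph.1]; exact hph.2) (abs_nonneg _) hε
      _ = (t.card + 1) * ε := by ring
      _ = ((t.card + 1 : ℕ) : ℝ) * ε := by push_cast; ring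

variable {E : Type*} [NormedAddCommGroup E] [InnerProductSpace ℝ E]

lemma inner_le_cos_sub {u v ω : E} (hu : ‖u‖ = 1) (hv : ‖v‖ = 1) (hω : ‖ω‖ = 1)
    {a b : ℝ} (hca : Real.cos a = ⟪u, ω⟫R) (hcb : Real.cos b = ⟪v, ω⟫R)
    (hsa : 0 ≤ Real.sin a) (hsb : 0 ≤ Real.sin b) :
    ⟪u, v⟫R ≤ Real.cos (a - b) := by
  have hωω : ⟪ω, ω⟫R = 1 := by rw [real_inner_self_eq_norm_sq, hω]; norm_num
  have hvc : ⟪ω, v⟫R = Real.cos b := by rw [real_inner_comm]; exact hcb.symm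
  have hexp : ⟪u - Real.cos a • ω, v - Real.cos b • ω⟫R
      = ⟪u, v⟫R - Real.cos a * Real.cos b := by
    rw [inner_sub_left, inner_sub_right, inner_sub_right, real_inner_smul_left,
      real_inner_smul_left, real_inner_smul_right, real_inner_smul_right, hωω,
      ← hca, hvc]
    ring
  have hnu : ‖u - Real.cos a • ω‖ = Real.sin a := by
    have hsq : ‖u - Real.cos a • ω‖ ^ 2 = Real.sin a ^ 2 := by
      rw [norm_sub_sq_real, real_inner_smul_right, ← hca, norm_smul, hω, hu,
        Real.norm_eq_abs]
      nlinarith [Real.sin_sq_add_cos_sq a, sq_abs (Real.cos a)]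
    calc ‖u - Real.cos a • ω‖ = √(‖u - Real.cos a • ω‖ ^ 2) := (Real.sqrt_sq (norm_nonneg _)).symm
      _ = Real.sin a := by rw [hsq]; exact Real.sqrt_sq hsa
  have hnv : ‖v - Real.cos b • ω‖ = Real.sin b := by
    have hsq : ‖v - Real.cos b • ω‖ ^ 2 = Real.sin b ^ 2 := by
      rw [norm_sub_sq_real, real_inner_smul_right, ← hcb, norm_smul, hω, hv,
        Real.norm_eq_abs]
      nlinarith [Real.sin_sq_add_cos_sq b, sq_abs (Real.cos b)]
    calc ‖v - Real.cos b • ω‖ = √(‖v - Real.cos b • ω‖ ^ 2) := (Real.sqrt_sq (norm_nonneg _)).symm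
      _ = Real.sin b := by rw [hsq]; exact Real.sqrt_sq hsb
  have hCS := real_inner_le_norm (u - Real.cos a • ω) (v - Real.cos b • ω)
  rw [hexp, hnu, hnv] at hCS
  rw [Real.cos_sub]
  linarith

lemma abs_sub_le_of_inner {u v : E} (hu : ‖u‖ = 1) (hv : ‖v‖ = 1)
    {a b : ℝ} (ha : a ∈ Set.Icc 0 π) (hb : b ∈ Set.Icc 0 π)
    (h : ⟪u, v⟫R ≤ Real.cos (a - b)) :
    |a - b| ≤ (π / 2) * ‖u - v‖ := by
  have h1 : ‖u - v‖ ^ 2 = 2 - 2 * ⟪u, v⟫R := by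
    rw [norm_sub_sq_real, hu, hv]; ring
  have h2 : 2 - 2 * Real.cos (a - b) ≤ ‖u - v‖ ^ 2 := by rw [h1]; linarith
  have h3 := Real.sin_sq_eq_half_sub ((a - b) / 2)
  rw [show 2 * ((a - b) / 2) = a - b by ring] at h3
  have h4 : 4 * Real.sin ((a - b) / 2) ^ 2 ≤ ‖u - v‖ ^ 2 := by rw [h3]; linarith
  have hab1 : |a - b| ≤ π := by
    rw [abs_le]; constructor <;> [linarith [ha.1, hb.2]; linarith [ha.2, hb.1]]
  have hsin_abs : Real.sin (|a - b| / 2) ^ 2 = Real.sin ((a - b) / 2) ^ 2 := by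
    rcases abs_cases (a - b) with ⟨h', _⟩ | ⟨h', _⟩
    · rw [h']
    · rw [h', neg_div, Real.sin_neg, neg_sq]
  have hjordan : 2 / π * (|a - b| / 2) ≤ Real.sin (|a - b| / 2) :=
    Real.mul_le_sin (by positivity) (by linarith [abs_nonneg (a - b)])
  have h5 : (|a - b| / π * 2) ^ 2 ≤ ‖u - v‖ ^ 2 := by
    have hnn : 0 ≤ 2 / π * (|a - b| / 2) := by positivity
    have hj2 := pow_le_pow_left₀ hnn hjordan 2
    have heq2 : (|a - b| / π * 2) ^ 2 = 4 * (2 / π * (|a - b| / 2)) ^ 2 := by ring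
    rw [heq2]
    rw [← hsin_abs] at h4
    linarith
  have h6 : |a - b| / π * 2 ≤ ‖u - v‖ := by
    have hl : 0 ≤ |a - b| / π * 2 := by positivity
    calc |a - b| / π * 2 = √((|a - b| / π * 2) ^ 2) := (Real.sqrt_sq hl).symm
      _ ≤ √(‖u - v‖ ^ 2) := Real.sqrt_le_sqrt h5
      _ = ‖u - v‖ := Real.sqrt_sq (norm_nonneg _)
  have hπ := Real.pi_pos
  have heq : (π / 2) * (|a - b| / π * 2) = |a - b| := by field_simp
  calc |a - b| = (π / 2) * (|a - b| / π * 2) := heq.symm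
    _ ≤ (π / 2) * ‖u - v‖ := mul_le_mul_of_nonneg_left h6 (by positivity)

lemma angle_diff_le {x y w : E} (hx : x ≠ 0) (hy : y ≠ 0) (hw : w ≠ 0) :
    |angle x w - angle y w| ≤ (π / 2) * ‖(‖x‖⁻¹ • x : E) - ‖y‖⁻¹ • y‖ := by
  have hnx : ‖x‖ ≠ 0 := norm_ne_zero_iff.2 hx
  have hny : ‖y‖ ≠ 0 := norm_ne_zero_iff.2 hy
  have hnw : ‖w‖ ≠ 0 := norm_ne_zero_iff.2 hw
  have hu : ‖(‖x‖⁻¹ • x : E)‖ = 1 := by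
    rw [norm_smul, norm_inv, norm_norm, inv_mul_cancel₀ hnx]
  have hv : ‖(‖y‖⁻¹ • y : E)‖ = 1 := by
    rw [norm_smul, norm_inv, norm_norm, inv_mul_cancel₀ hny]
  have hω : ‖(‖w‖⁻¹ • w : E)‖ = 1 := by
    rw [norm_smul, norm_inv, norm_norm, inv_mul_cancel₀ hnw]
  have hca : Real.cos (angle x w) = ⟪(‖x‖⁻¹ • x : E), (‖w‖⁻¹ • w : E)⟫R := by
    rw [cos_angle, real_inner_smul_left, real_inner_smul_right, div_eq_mul_inv, mul_inv]
    ring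
  have hcb : Real.cos (angle y w) = ⟪(‖y‖⁻¹ • y : E), (‖w‖⁻¹ • w : E)⟫R := by
    rw [cos_angle, real_inner_smul_left, real_inner_smul_right, div_eq_mul_inv, mul_inv]
    ring
  have hsa : 0 ≤ Real.sin (angle x w) :=
    Real.sin_nonneg_of_nonneg_of_le_pi (angle_nonneg x w) (angle_le_pi x w)
  have hsb : 0 ≤ Real.sin (angle y w) :=
    Real.sin_nonneg_of_nonneg_of_le_pi (angle_nonneg y w) (angle_le_pi y w)
  exact abs_sub_le_of_inner hu hv ⟨angle_nonneg x w, angle_le_pi x w⟩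
    ⟨angle_nonneg y w, angle_le_pi y w⟩
    (inner_le_cos_sub hu hv hω hca hcb hsa hsb)

lemma unit_diff_le {x y : E} (hx : x ≠ 0) (hy : y ≠ 0) :
    ‖(‖x‖⁻¹ • x : E) - ‖y‖⁻¹ • y‖ ≤ 2 * max (1 / ‖x‖) (1 / ‖y‖) * ‖x - y‖ := by
  have hnx : (0:ℝ) < ‖x‖ := norm_pos_iff.2 hx
  have hny : (0:ℝ) < ‖y‖ := norm_pos_iff.2 hy
  have hsplit : (‖x‖⁻¹ • x : E) - ‖y‖⁻¹ • y
      = ‖x‖⁻¹ • (x - y) + (‖x‖⁻¹ - ‖y‖⁻¹) • y := by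
    rw [smul_sub, sub_smul]; abel
  have hM : ‖x‖⁻¹ ≤ max (1 / ‖x‖) (1 / ‖y‖) := by
    rw [← one_div]; exact le_max_left _ _
  have h2 : ‖((‖x‖⁻¹ - ‖y‖⁻¹) • y : E)‖ ≤ ‖x‖⁻¹ * ‖x - y‖ := by
    rw [norm_smul, Real.norm_eq_abs]
    have heq : ‖x‖⁻¹ - ‖y‖⁻¹ = (‖y‖ - ‖x‖) * (‖x‖⁻¹ * ‖y‖⁻¹) := by field_simp
    rw [heq, abs_mul, abs_of_pos (by positivity : (0:ℝ) < ‖x‖⁻¹ * ‖y‖⁻¹)]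
    have hnn : |‖y‖ - ‖x‖| ≤ ‖x - y‖ := by
      have := abs_norm_sub_norm_le y x
      rwa [norm_sub_rev] at this
    calc |‖y‖ - ‖x‖| * (‖x‖⁻¹ * ‖y‖⁻¹) * ‖y‖
        = |‖y‖ - ‖x‖| * ‖x‖⁻¹ := by field_simp
      _ ≤ ‖x - y‖ * ‖x‖⁻¹ := by
          apply mul_le_mul_of_nonneg_right hnn (by positivity)
      _ = ‖x‖⁻¹ * ‖x - y‖ := by ring
  calc ‖(‖x‖⁻¹ • x : E) - ‖y‖⁻¹ • y‖
      ≤ ‖(‖x‖⁻¹ • (x - y) : E)‖ + ‖((‖x‖⁻¹ - ‖y‖⁻¹) • y : E)‖ := by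
        rw [hsplit]; exact norm_add_le _ _
    _ ≤ ‖x‖⁻¹ * ‖x - y‖ + ‖x‖⁻¹ * ‖x - y‖ := by
        apply add_le_add _ h2
        rw [norm_smul, Real.norm_eq_abs, abs_of_pos (by positivity)]
    _ ≤ 2 * max (1 / ‖x‖) (1 / ‖y‖) * ‖x - y‖ := by
        have := mul_le_mul_of_nonneg_right hM (norm_nonneg (x - y))
        linarith

lemma aux_sin_lip (p q : ℝ) : |Real.sin p - Real.sin q| ≤ |p - q| := by
  rw [Real.sin_sub_sin, abs_mul, abs_mul]
  have h1 : |Real.sin ((p - q)/2)| ≤ |(p - q)/2| := Real.abs_sin_le_abs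
  have h2 : |Real.cos ((p + q)/2)| ≤ 1 := Real.abs_cos_le_one _
  have h3 : |(p - q)/2| = |p - q|/2 := by rw [abs_div, abs_two]
  calc |(2:ℝ)| * |Real.sin ((p - q)/2)| * |Real.cos ((p + q)/2)|
      ≤ |(2:ℝ)| * |(p - q)/2| * 1 := by
        apply mul_le_mul (mul_le_mul (le_refl _) h1 (abs_nonneg _) (abs_nonneg _)) h2
          (abs_nonneg _) (by positivity)
    _ = |p - q| := by rw [h3, abs_two]; ring

end Aux
section MainAux
open Real Set InnerProductGeometry Finset

lemma factor_mem {θ0 : ℝ} (h : θ0 ∈ Set.Icc 0 π) (j : ℕ) :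
    (π - thetaSeq θ0 j) / π ∈ Set.Icc (0:ℝ) 1 :=
  ⟨div_nonneg (by linarith [(theta_mem h j).2]) Real.pi_pos.le,
    by rw [div_le_one Real.pi_pos]; linarith [(theta_mem h j).1]⟩

lemma prod_factor_mem {θ0 : ℝ} (h : θ0 ∈ Set.Icc 0 π) (s : Finset ℕ) :
    (∏ j ∈ s, (π - thetaSeq θ0 j) / π) ∈ Set.Icc (0:ℝ) 1 :=
  ⟨Finset.prod_nonneg fun j _ => (factor_mem h j).1,
    Finset.prod_le_one (fun j _ => (factor_mem h j).1) (fun j _ => (factor_mem h j).2)⟩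

lemma prod_factor_diff {a b : ℝ} (ha : a ∈ Set.Icc 0 π) (hb : b ∈ Set.Icc 0 π)
    (s : Finset ℕ) :
    |∏ j ∈ s, (π - thetaSeq b j) / π - ∏ j ∈ s, (π - thetaSeq a j) / π|
      ≤ s.card * (|a - b| / π) := by
  apply prod_diff_le (by positivity) (fun j _ => factor_mem hb j) (fun j _ => factor_mem ha j)
  intro j _
  have heq : (π - thetaSeq b j) / π - (π - thetaSeq a j) / π
      = (thetaSeq a j - thetaSeq b j) / π := by ring
  rw [heq, abs_div, abs_of_pos Real.pi_pos, div_le_div_iff₀ Real.pi_pos Real.pi_pos]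
  exact mul_le_mul_of_nonneg_right (theta_lip ha hb j) Real.pi_pos.le

end MainAux

open Real InnerProductGeometry in
set_option maxHeartbeats 2000000 in
theorem stmt17 (k d : ℕ) (xs : EuclideanSpace ℝ (Fin k)) (hxs : xs ≠ 0)
    (x y : EuclideanSpace ℝ (Fin k)) (hx : x ≠ 0) (hy : y ≠ 0) :
    ‖hfield k d xs x - hfield k d xs y‖ ≤
      (1 / 2 ^ d +
        ((6 * (d : ℝ) + 4 * (d : ℝ) ^ 2) / (Real.pi * 2 ^ d)) *
          max (1 / ‖x‖) (1 / ‖y‖) * ‖xs‖) * ‖x - y‖ := by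
  have hπ := Real.pi_pos
  have hnx : (0:ℝ) < ‖x‖ := norm_pos_iff.2 hx
  have hny : (0:ℝ) < ‖y‖ := norm_pos_iff.2 hy
  simp only [hfield]
  set c : ℝ := ((2:ℝ)^d)⁻¹ with hc_def
  have hc : 0 < c := by positivity
  set a := InnerProductGeometry.angle x xs with ha_def
  set b := InnerProductGeometry.angle y xs with hb_def
  have haI : a ∈ Set.Icc 0 π := ⟨angle_nonneg _ _, angle_le_pi _ _⟩
  have hbI : b ∈ Set.Icc 0 π := ⟨angle_nonneg _ _, angle_le_pi _ _⟩
  set u : EuclideanSpace ℝ (Fin k) := ‖x‖⁻¹ • x with hu_def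
  set v : EuclideanSpace ℝ (Fin k) := ‖y‖⁻¹ • y with hv_def
  have hvn : ‖v‖ = 1 := by
    rw [hv_def, norm_smul, norm_inv, norm_norm, inv_mul_cancel₀ hny.ne']
  set Pa := ∏ i ∈ Finset.range d, (π - thetaSeq a i) / π with hPa_def
  set Pb := ∏ i ∈ Finset.range d, (π - thetaSeq b i) / π with hPb_def
  set Sa := ∑ i ∈ Finset.range d,
      (Real.sin (thetaSeq a i) / π) * ∏ j ∈ Finset.Ico (i+1) d, (π - thetaSeq a j) / π
    with hSa_def
  set Sb := ∑ i ∈ Finset.range d,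
      (Real.sin (thetaSeq b i) / π) * ∏ j ∈ Finset.Ico (i+1) d, (π - thetaSeq b j) / π
    with hSb_def
  set M := max (1/‖x‖) (1/‖y‖) with hM_def
  set N := ‖x - y‖ with hN_def
  set X := ‖xs‖ with hX_def
  set δ := |a - b| with hδ_def
  have hM0 : (0:ℝ) < M := lt_of_lt_of_le (by positivity) (le_max_left (1/‖x‖) (1/‖y‖))
  have hN0 : (0:ℝ) ≤ N := norm_nonneg _
  have hX0 : (0:ℝ) ≤ X := norm_nonneg _
  have hδ0 : (0:ℝ) ≤ δ := abs_nonneg _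
  have hMN0 : (0:ℝ) ≤ M * N := by positivity
  -- angle difference bound
  have huv : ‖u - v‖ ≤ 2 * M * N := unit_diff_le hx hy
  have hangle : δ ≤ π * (M * N) := by
    calc δ ≤ π / 2 * ‖u - v‖ := angle_diff_le hx hy hxs
      _ ≤ π / 2 * (2 * M * N) := by gcongr
      _ = π * (M * N) := by ring
  have hδπ : δ / π ≤ M * N := by
    rw [div_le_iff₀ hπ]; linarith [hangle]
  -- product difference
  have hP : |Pb - Pa| ≤ (d:ℝ) * (δ / π) := by
    have h := prod_factor_diff haI hbI (Finset.range d)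
    rwa [Finset.card_range] at h
  -- inner product differences
  have hPico : ∀ i : ℕ,
      |(∏ j ∈ Finset.Ico (i+1) d, (π - thetaSeq b j) / π)
        - ∏ j ∈ Finset.Ico (i+1) d, (π - thetaSeq a j) / π| ≤ (d:ℝ) * (δ / π) := by
    intro i
    have h := prod_factor_diff haI hbI (Finset.Ico (i+1) d)
    apply h.trans
    apply mul_le_mul_of_nonneg_right _ (by positivity)
    rw [Nat.card_Ico]
    exact_mod_cast Nat.sub_le d (i+1)
  -- |Sa| bound
  have hSa_abs : |Sa| ≤ (d:ℝ) * (1 / π) := by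
    calc |Sa| ≤ ∑ i ∈ Finset.range d,
        |(Real.sin (thetaSeq a i) / π) * ∏ j ∈ Finset.Ico (i+1) d, (π - thetaSeq a j) / π| :=
          Finset.abs_sum_le_sum_abs _ _
      _ ≤ ∑ _i ∈ Finset.range d, (1/π) * 1 := by
          apply Finset.sum_le_sum
          intro i _
          rw [abs_mul]
          apply mul_le_mul
          · rw [abs_div, abs_of_pos hπ, div_le_div_iff₀ hπ hπ]
            exact mul_le_mul_of_nonneg_right (Real.abs_sin_le_one _) hπ.le
          · rw [abs_of_nonneg (prod_factor_mem haI _).1]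
            exact (prod_factor_mem haI _).2
          · exact abs_nonneg _
          · positivity
      _ = (d:ℝ) * (1/π) := by
          rw [Finset.sum_const, Finset.card_range, nsmul_eq_mul]
          ring
  -- |Sb - Sa| bound
  have hS : |Sb - Sa| ≤ (d:ℝ) * (δ/π + (d:ℝ) * (δ/π) / π) := by
    rw [hSb_def, hSa_def, ← Finset.sum_sub_distrib]
    calc |∑ i ∈ Finset.range d,
          ((Real.sin (thetaSeq b i) / π) * ∏ j ∈ Finset.Ico (i+1) d, (π - thetaSeq b j) / π
          - (Real.sin (thetaSeq a i) / π) * ∏ j ∈ Finset.Ico (i+1) d, (π - thetaSeq a j) / π)|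
        ≤ ∑ i ∈ Finset.range d,
          |(Real.sin (thetaSeq b i) / π) * ∏ j ∈ Finset.Ico (i+1) d, (π - thetaSeq b j) / π
          - (Real.sin (thetaSeq a i) / π) * ∏ j ∈ Finset.Ico (i+1) d, (π - thetaSeq a j) / π| :=
          Finset.abs_sum_le_sum_abs _ _
      _ ≤ ∑ _i ∈ Finset.range d, (δ/π + (d:ℝ) * (δ/π) / π) := by
          apply Finset.sum_le_sum
          intro i _
          have hsinlip : |Real.sin (thetaSeq b i) - Real.sin (thetaSeq a i)| ≤ δ := by
            refine (aux_sin_lip _ _).trans ((theta_lip hbI haI i).trans ?_)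
            rw [hδ_def, abs_sub_comm]
          have hsplit : (Real.sin (thetaSeq b i) / π) * ∏ j ∈ Finset.Ico (i+1) d, (π - thetaSeq b j) / π
              - (Real.sin (thetaSeq a i) / π) * ∏ j ∈ Finset.Ico (i+1) d, (π - thetaSeq a j) / π
              = (Real.sin (thetaSeq b i) / π) *
                  ((∏ j ∈ Finset.Ico (i+1) d, (π - thetaSeq b j) / π)
                    - ∏ j ∈ Finset.Ico (i+1) d, (π - thetaSeq a j) / π)
                + ((Real.sin (thetaSeq b i) - Real.sin (thetaSeq a i)) / π) *
                    ∏ j ∈ Finset.Ico (i+1) d, (π - thetaSeq a j) / π := by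
            ring
          rw [hsplit]
          calc |(Real.sin (thetaSeq b i) / π) *
                  ((∏ j ∈ Finset.Ico (i+1) d, (π - thetaSeq b j) / π)
                    - ∏ j ∈ Finset.Ico (i+1) d, (π - thetaSeq a j) / π)
                + ((Real.sin (thetaSeq b i) - Real.sin (thetaSeq a i)) / π) *
                    ∏ j ∈ Finset.Ico (i+1) d, (π - thetaSeq a j) / π|
              ≤ |(Real.sin (thetaSeq b i) / π)| *
                  |(∏ j ∈ Finset.Ico (i+1) d, (π - thetaSeq b j) / π)
                    - ∏ j ∈ Finset.Ico (i+1) d, (π - thetaSeq a j) / π|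
                + |(Real.sin (thetaSeq b i) - Real.sin (thetaSeq a i)) / π| *
                    |∏ j ∈ Finset.Ico (i+1) d, (π - thetaSeq a j) / π| := by
                rw [← abs_mul, ← abs_mul]; exact abs_add_le _ _
            _ ≤ (1/π) * ((d:ℝ) * (δ/π)) + (δ/π) * 1 := by
                apply add_le_add
                · apply mul_le_mul _ (hPico i) (abs_nonneg _) (by positivity)
                  rw [abs_div, abs_of_pos hπ, div_le_div_iff₀ hπ hπ]
                  exact mul_le_mul_of_nonneg_right (Real.abs_sin_le_one _) hπ.le
                · apply mul_le_mul
                  · rw [abs_div, abs_of_pos hπ, div_le_div_iff₀ hπ hπ]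
                    exact mul_le_mul_of_nonneg_right hsinlip hπ.le
                  · rw [abs_of_nonneg (prod_factor_mem haI _).1]
                    exact (prod_factor_mem haI _).2
                  · exact abs_nonneg _
                  · positivity
            _ = δ/π + (d:ℝ) * (δ/π) / π := by ring
      _ = (d:ℝ) * (δ/π + (d:ℝ) * (δ/π) / π) := by
          rw [Finset.sum_const, Finset.card_range, nsmul_eq_mul]
  -- key vector identity
  have hxu : (Sa * (X / ‖x‖)) • x = (Sa * X) • u := by
    rw [hu_def, smul_smul]
    congr 1
    field_simp
  have hyv : (Sb * (X / ‖y‖)) • y = (Sb * X) • v := by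
    rw [hv_def, smul_smul]
    congr 1
    field_simp
  have key : (-(c * Pa)) • xs + c • (x - (Sa * (X / ‖x‖)) • x)
      - ((-(c * Pb)) • xs + c • (y - (Sb * (X / ‖y‖)) • y))
      = (c * (Pb - Pa)) • xs + c • (x - y) + ((c * X) • (Sb • v - Sa • u)) := by
    rw [hxu, hyv]
    module
  rw [key]
  -- norm bounds
  have hSvu : ‖Sb • v - Sa • u‖ ≤ |Sb - Sa| + |Sa| * ‖u - v‖ := by
    have h1 : Sb • v - Sa • u = (Sb - Sa) • v + Sa • (v - u) := by module
    rw [h1]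
    calc ‖(Sb - Sa) • v + Sa • (v - u)‖ ≤ ‖(Sb - Sa) • v‖ + ‖Sa • (v - u)‖ := norm_add_le _ _
      _ = |Sb - Sa| * ‖v‖ + |Sa| * ‖v - u‖ := by
          rw [norm_smul (Sb - Sa) v, norm_smul Sa (v - u)]
          simp only [Real.norm_eq_abs]
      _ = |Sb - Sa| + |Sa| * ‖u - v‖ := by rw [hvn, norm_sub_rev, mul_one]
  have harith : 2 * π * (d:ℝ) ≤ 4 * (d:ℝ) + 3 * (d:ℝ)^2 := by
    rcases Nat.eq_zero_or_pos d with rfl | hd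
    · norm_num
    · have hd1 : (1:ℝ) ≤ (d:ℝ) := by exact_mod_cast hd
      nlinarith [Real.pi_lt_d2]
  have hconst : 2 * (d:ℝ) + ((d:ℝ)^2 + 2*(d:ℝ)) / π ≤ (6 * (d:ℝ) + 4 * (d:ℝ)^2) / π := by
    have h2 : 2 * (d:ℝ) + ((d:ℝ)^2 + 2*(d:ℝ)) / π = (2 * π * (d:ℝ) + ((d:ℝ)^2 + 2*(d:ℝ))) / π := by
      field_simp
    rw [h2, div_le_div_iff₀ hπ hπ]
    have hd0 : (0:ℝ) ≤ (d:ℝ) := Nat.cast_nonneg _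
    nlinarith [harith]
  calc ‖(c * (Pb - Pa)) • xs + c • (x - y) + ((c * X) • (Sb • v - Sa • u))‖
      ≤ ‖(c * (Pb - Pa)) • xs + c • (x - y)‖ + ‖(c * X) • (Sb • v - Sa • u)‖ := norm_add_le _ _
    _ ≤ (‖(c * (Pb - Pa)) • xs‖ + ‖c • (x - y)‖) + ‖(c * X) • (Sb • v - Sa • u)‖ := by
        gcongr
        exact norm_add_le _ _
    _ = c * |Pb - Pa| * X + c * N + (c * X) * ‖Sb • v - Sa • u‖ := by
        rw [norm_smul (c * (Pb - Pa)) xs, norm_smul c (x - y),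
          norm_smul (c * X) (Sb • v - Sa • u)]
        simp only [Real.norm_eq_abs, abs_mul]
        rw [← hX_def, ← hN_def]
        simp only [abs_of_pos hc, abs_of_nonneg hX0]
        try ring
    _ ≤ c * ((d:ℝ) * (δ/π)) * X + c * N
        + (c * X) * (((d:ℝ) * (δ/π + (d:ℝ) * (δ/π) / π)) + ((d:ℝ) * (1/π)) * (2 * M * N)) := by
        gcongr
        calc ‖Sb • v - Sa • u‖ ≤ |Sb - Sa| + |Sa| * ‖u - v‖ := hSvu
          _ ≤ (d:ℝ) * (δ/π + (d:ℝ) * (δ/π) / π) + ((d:ℝ) * (1/π)) * (2 * M * N) := by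
              gcongr
    _ ≤ c * ((d:ℝ) * (M*N)) * X + c * N
        + (c * X) * (((d:ℝ) * ((M*N) + (d:ℝ) * (M*N) / π)) + ((d:ℝ) * (1/π)) * (2 * M * N)) := by
        gcongr
    _ = c * N + (c * X * (M * N)) * (2 * (d:ℝ) + ((d:ℝ)^2 + 2*(d:ℝ)) / π) := by
        field_simp
        try ring
    _ ≤ c * N + (c * X * (M * N)) * ((6 * (d:ℝ) + 4 * (d:ℝ)^2) / π) := by
        gcongr
    _ = (1 / 2 ^ d + ((6 * (d:ℝ) + 4 * (d:ℝ) ^ 2) / (π * 2 ^ d)) * M * X) * N := by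
        rw [hc_def]
        field_simp
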